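/- Let f : ℝ^m → N be an L-Lipschitz map into a Hadamard manifold N, and for r > 0 define B_r f(x) as the Riemannian center of mass of f restricted to the ball B(x,r) with normalized Lebesgue measure. Then B_r f is L-Lipschitz. -/

import Mathlib

open MeasureTheory
open scoped RealInnerProductSpace

/-- The data of a Hadamard manifold `M` needed here: the inverse exponential maps
`log p : M → T_p M ⊆ V` into an ambient Hilbert space, which are norm-preserving on
radial lines, distance-nonincreasing (the CAT(0) property), and satisfy the strong
monotonicity inequality expressing the 1-strong convexity of `½ d(·,y)²`. -/
structure HadamardData (M : Type*) (V : Type*) [MetricSpace M]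
    [NormedAddCommGroup V] [InnerProductSpace ℝ V] where
  /-- the inverse exponential map `log p q = exp_p⁻¹ q` -/
  log : M → M → V
  norm_log : ∀ p q, ‖log p q‖ = dist p q
  /-- `exp_p⁻¹` is distance-nonincreasing (nonpositive curvature) -/
  nonexpansive : ∀ p y z, ‖log p y - log p z‖ ≤ dist y z
  /-- strong monotonicity: `d(p,q)² ≤ ⟪exp_p⁻¹ y, exp_p⁻¹ q⟫ + ⟪exp_q⁻¹ y, exp_q⁻¹ p⟫` -/
  strong_convexity : ∀ p q y, dist p q ^ 2 ≤ ⟪log p y, log p q⟫ + ⟪log q y, log q p⟫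

/-- if `f : ℝᵐ → N` is `L`-Lipschitz into a Hadamard manifold and
`B_r f (x)` is the Riemannian center of mass of `f` on the ball `B(x,r)` with normalized
Lebesgue measure — characterized by `∫_{B(x,r)} exp_{B_r f(x)}⁻¹ (f u) du = 0` — then
`B_r f` is `L`-Lipschitz. -/
theorem stmt15 {N V : Type*} [MetricSpace N]
    [NormedAddCommGroup V] [InnerProductSpace ℝ V] [CompleteSpace V]
    (H : HadamardData N V) (m : ℕ) (L : NNReal)
    (f : EuclideanSpace ℝ (Fin m) → N) (hf : LipschitzWith L f)
    (r : ℝ) (hr : 0 < r)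
    (Brf : EuclideanSpace ℝ (Fin m) → N)
    (hBrf : ∀ x, (∫ u in Metric.ball x r, H.log (Brf x) (f u)) = 0) :
    LipschitzWith L Brf := by
  have hlog1 : ∀ p : N, LipschitzWith 1 (H.log p) := fun p =>
    LipschitzWith.of_dist_le_mul fun a b => by
      rw [dist_eq_norm]; simpa using H.nonexpansive p a b
  refine LipschitzWith.of_dist_le_mul fun x y => ?_
  set p := Brf x with hp
  set q := Brf y with hq
  set c := y - x with hc
  have hcd : ‖c‖ = dist x y := by rw [hc, dist_eq_norm, norm_sub_rev]
  set B := Metric.ball x r with hB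
  have hμpos : 0 < volume B := Metric.measure_ball_pos volume x hr
  have hμtop : volume B ≠ ⊤ := measure_ball_lt_top.ne
  set μr := (volume B).toReal with hμ
  have hμpos' : 0 < μr := ENNReal.toReal_pos hμpos.ne' hμtop
  set D := dist p q with hD
  -- integrability
  have hint : ∀ (z : N) (c' : EuclideanSpace ℝ (Fin m)),
      IntegrableOn (fun u => H.log z (f (u + c'))) B volume := by
    intro z c'
    have hlip : LipschitzWith (1 * (L * 1)) (fun u => H.log z (f (u + c'))) :=
      (hlog1 z).comp (hf.comp (IsometryEquiv.addRight c').isometry.lipschitz)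
    exact (hlip.continuous.locallyIntegrable.integrableOn_isCompact
      (isCompact_closedBall x r)).mono_set Metric.ball_subset_closedBall
  have hint0 : IntegrableOn (fun u => H.log p (f u)) B volume := by
    have := hint p 0
    simpa using this
  -- the translated center-of-mass identity
  have hmap : (fun u : EuclideanSpace ℝ (Fin m) => u + c) ⁻¹' (Metric.ball y r) = B := by
    ext u
    simp only [Set.mem_preimage, Metric.mem_ball, hB, hc, dist_eq_norm]
    have : u + (y - x) - y = u - x := by abel
    rw [this]
  have hzero2 : (∫ u in B, H.log q (f (u + c))) = 0 := by
    have h := (measurePreserving_add_right volume c).setIntegral_preimage_emb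
      (MeasurableEquiv.addRight c).measurableEmbedding
      (fun v => H.log q (f v)) (Metric.ball y r)
    rw [hmap] at h
    rw [h]
    exact hBrf y
  -- pointwise inequality
  set K : ℝ := (L * dist x y) * D with hK
  have hpt : ∀ u, D ^ 2 ≤ ⟪H.log p (f u), H.log p q⟫ + ⟪H.log q (f (u + c)), H.log q p⟫ + K := by
    intro u
    have h1 := H.strong_convexity p q (f u)
    have h2 : ⟪H.log q (f u), H.log q p⟫ ≤ ⟪H.log q (f (u + c)), H.log q p⟫ + K := by
      have hsplit : ⟪H.log q (f u), H.log q p⟫ =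
          ⟪H.log q (f (u + c)), H.log q p⟫ + ⟪H.log q (f u) - H.log q (f (u + c)), H.log q p⟫ := by
        rw [inner_sub_left]; ring
      rw [hsplit]
      have hbound : ⟪H.log q (f u) - H.log q (f (u + c)), H.log q p⟫ ≤ K := by
        calc ⟪H.log q (f u) - H.log q (f (u + c)), H.log q p⟫
            ≤ ‖H.log q (f u) - H.log q (f (u + c))‖ * ‖H.log q p‖ := real_inner_le_norm _ _
          _ ≤ (L * dist u (u + c)) * ‖H.log q p‖ := by
              apply mul_le_mul_of_nonneg_right _ (norm_nonneg _)
              exact (H.nonexpansive q (f u) (f (u + c))).trans (hf.dist_le_mul u (u + c))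
          _ = K := by
              rw [H.norm_log, hK]
              have h3 : dist u (u + c) = ‖c‖ := by
                rw [dist_eq_norm]
                have : u - (u + c) = -c := by abel
                rw [this, norm_neg]
              rw [h3, hcd, dist_comm q p]
      linarith
    linarith
  -- integrate
  have hconst : IntegrableOn (fun _ : EuclideanSpace ℝ (Fin m) => K) B volume :=
    integrableOn_const hμtop
  have hint1 : IntegrableOn (fun u => ⟪H.log p (f u), H.log p q⟫) B volume :=
    hint0.inner_const _
  have hint2 : IntegrableOn (fun u => ⟪H.log q (f (u + c)), H.log q p⟫) B volume :=
    (hint q c).inner_const _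
  have hmono : (∫ u in B, D ^ 2) ≤
      ∫ u in B, (⟪H.log p (f u), H.log p q⟫ + ⟪H.log q (f (u + c)), H.log q p⟫ + K) := by
    apply setIntegral_mono (integrableOn_const hμtop)
      ((hint1.add hint2).add hconst)
    exact hpt
  have hlhs : (∫ _ in B, D ^ 2) = μr * D ^ 2 := by
    rw [setIntegral_const, smul_eq_mul, measureReal_def, ← hμ]
  have hrhs : (∫ u in B, (⟪H.log p (f u), H.log p q⟫ + ⟪H.log q (f (u + c)), H.log q p⟫ + K))
      = μr * K := by
    have hint12 : IntegrableOn
        (fun u => ⟪H.log p (f u), H.log p q⟫ + ⟪H.log q (f (u + c)), H.log q p⟫) B volume :=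
      hint1.add hint2
    rw [integral_add hint12 hconst, integral_add hint1 hint2]
    have e1 : (∫ u in B, ⟪H.log p (f u), H.log p q⟫) = 0 := by
      have : (∫ u in B, ⟪H.log p q, H.log p (f u)⟫) = ⟪H.log p q, ∫ u in B, H.log p (f u)⟫ :=
        integral_inner hint0 _
      simp_rw [← real_inner_comm (x := H.log p q)] at this
      rw [this, hBrf x, inner_zero_left]
    have e2 : (∫ u in B, ⟪H.log q (f (u + c)), H.log q p⟫) = 0 := by
      have : (∫ u in B, ⟪H.log q p, H.log q (f (u + c))⟫)
          = ⟪H.log q p, ∫ u in B, H.log q (f (u + c))⟫ := integral_inner (hint q c) _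
      simp_rw [← real_inner_comm (x := H.log q p)] at this
      rw [this, hzero2, inner_zero_left]
    rw [e1, e2, setIntegral_const, smul_eq_mul, measureReal_def, ← hμ]
    ring
  have hineq : μr * D ^ 2 ≤ μr * K := by
    rw [← hlhs, ← hrhs]; exact hmono
  have hD2K : D ^ 2 ≤ K := le_of_mul_le_mul_left hineq hμpos'
  -- conclude
  rcases eq_or_lt_of_le (dist_nonneg : (0:ℝ) ≤ D) with h0 | h0
  · rw [hD, ← h0]
    positivity
  · have : D * D ≤ (L * dist x y) * D := by
      calc D * D = D ^ 2 := by ring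
        _ ≤ K := hD2K
        _ = (L * dist x y) * D := rfl
    exact le_of_mul_le_mul_right this h0
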